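/- Let g ∈ Mat_n(k) with rows encoded as polynomials b_i(t) = Σ_{j=0}^{n-1} g_{i,j+1} t^j/j!. Then the i-th Wronskian y_i(g)(t) = W(b_1,...,b_i) equals Σ_{I ∈ C_n^i} m(I)·Δ_{[i],I}(g)·t^{ℓ(I)}/ℓ(I)!, where ℓ(I) = Σ_k (a_k − k) and m(I) is the number of saturated chains from {1,...,i} to I in the partial order on i-subsets where I ⟶ I' if I' is obtained from I by increasing one element by 1. -/

import Mathlib

open Finset Polynomial

/-- The length `ℓ(I) = ∑_k (a_k − k)` of an `i`-element subset of `{0,...,n−1}`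
(0-based indexing), computed as `(∑ a ∈ I, a) − (0 + 1 + ... + (i−1))`. -/
def lenZ (i : ℕ) (I : Finset ℕ) : ℕ := (∑ a ∈ I, a) - i * (i - 1) / 2

/-- `numPaths n p I J` is the number of saturated chains of length `p` from `I` to `J`
in the partial order on subsets of `{0,...,n−1}` where one step replaces an element
`a` (with `a + 1` not in the set and `a + 1 < n`) by `a + 1`. -/
def numPaths (n : ℕ) : ℕ → Finset ℕ → Finset ℕ → ℕ
  | 0, I, J => if I = J then 1 else 0
  | p + 1, I, J =>
      ∑ a ∈ I.filter (fun a => a + 1 ∉ I ∧ a + 1 < n),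
        numPaths n p (insert (a + 1) (I.erase a)) J

section Aux
variable {k : Type*} [CommRing k] [Algebra ℚ k]

noncomputable def Wm (k : Type*) [CommRing k] [Algebra ℚ k] (a q : ℕ) : Polynomial k :=
  if q ≤ a then C (algebraMap ℚ k (1 / (a - q).factorial)) * X ^ (a - q) else 0

lemma invfact_mul_succ (m : ℕ) :
    algebraMap ℚ k (1 / (m + 1).factorial) * ((m : k) + 1) = algebraMap ℚ k (1 / m.factorial) := by
  have h : ((m : k) + 1) = algebraMap ℚ k ((m : ℚ) + 1) := by push_cast; simp
  rw [h, ← map_mul]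
  congr 1
  have h2 : (m.factorial : ℚ) ≠ 0 := Nat.cast_ne_zero.mpr m.factorial_ne_zero
  have h1 : ((m : ℚ) + 1) ≠ 0 := by positivity
  rw [Nat.factorial_succ]
  push_cast
  field_simp

lemma Wm_derivative (a q : ℕ) (ha : 1 ≤ a) :
    derivative (Wm k a q) = Wm k (a - 1) q := by
  rcases lt_trichotomy q a with h | h | h
  · rw [Wm, if_pos h.le, Wm, if_pos (by omega : q ≤ a - 1)]
    have hm : a - q = (a - 1 - q) + 1 := by omega
    rw [hm, derivative_C_mul, derivative_X_pow, Nat.add_sub_cancel, ← mul_assoc, ← C_mul]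
    congr 2
    push_cast
    exact invfact_mul_succ _
  · subst h
    rw [Wm, if_pos le_rfl, Nat.sub_self, pow_zero, mul_one, derivative_C, Wm,
      if_neg (by omega : ¬ q ≤ q - 1)]
  · rw [Wm, if_neg (by omega), Wm, if_neg (by omega), derivative_zero]

lemma Wm_coeff_zero (a q : ℕ) :
    (Wm k a q).coeff 0 = if a = q then 1 else 0 := by
  rcases lt_trichotomy q a with h | rfl | h
  · rw [Wm, if_pos h.le, coeff_C_mul, coeff_X_pow, if_neg (by omega), mul_zero,
      if_neg (by omega)]
  · simp [Wm]
  · rw [Wm, if_neg (by omega), if_neg (by omega), coeff_zero]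

lemma derivative_finset_prod {ι : Type*} [DecidableEq ι] (s : Finset ι) (f : ι → Polynomial k) :
    derivative (∏ x ∈ s, f x) = ∑ j ∈ s, (∏ x ∈ s.erase j, f x) * derivative (f j) := by
  induction s using Finset.induction_on with
  | empty => simp
  | @insert a s ha ih =>
    rw [Finset.prod_insert ha, derivative_mul, ih, Finset.sum_insert ha, Finset.erase_insert ha,
      Finset.mul_sum]
    congr 1
    · exact mul_comm _ _
    · refine Finset.sum_congr rfl fun j hj => ?_
      rw [Finset.erase_insert_of_ne (by rintro rfl; exact ha hj),
        Finset.prod_insert (fun h => ha (Finset.mem_of_mem_erase h)), mul_assoc]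

lemma poly_eq_of_derivative_eq {f g : Polynomial k}
    (h1 : derivative f = derivative g) (h0 : f.coeff 0 = g.coeff 0) : f = g := by
  ext m
  cases m with
  | zero => exact h0
  | succ m =>
    have h2 : f.coeff (m + 1) * ((m : k) + 1) = g.coeff (m + 1) * ((m : k) + 1) := by
      have := congrArg (fun p => coeff p m) h1
      simpa [coeff_derivative] using this
    have h3 : (((m : k)) + 1) * algebraMap ℚ k (1 / ((m : ℚ) + 1)) = 1 := by
      have h : ((m : k) + 1) = algebraMap ℚ k ((m : ℚ) + 1) := by push_cast; simp
      rw [h, ← map_mul, mul_one_div, div_self (by positivity), map_one]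
    calc f.coeff (m + 1) = f.coeff (m + 1) * (((m : k) + 1) * algebraMap ℚ k (1 / ((m : ℚ) + 1))) := by
          rw [h3, mul_one]
      _ = g.coeff (m + 1) * (((m : k) + 1) * algebraMap ℚ k (1 / ((m : ℚ) + 1))) := by
          rw [← mul_assoc, h2, mul_assoc]
      _ = g.coeff (m + 1) := by rw [h3, mul_one]

lemma derivative_det {m : ℕ} (M : Matrix (Fin m) (Fin m) (Polynomial k)) :
    derivative M.det = ∑ p, (M.updateRow p fun q => derivative (M p q)).det := by
  have hrow : ∀ N : Matrix (Fin m) (Fin m) (Polynomial k),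
      N.det = ∑ σ : Equiv.Perm (Fin m), (Equiv.Perm.sign σ : ℤ) • ∏ x, N x (σ x) := by
    intro N
    rw [← Matrix.det_transpose, Matrix.det_apply]
    simp [Units.smul_def, Matrix.transpose_apply]
  rw [hrow M, map_sum]
  have lhs_eq : ∀ σ : Equiv.Perm (Fin m),
      derivative ((Equiv.Perm.sign σ : ℤ) • ∏ x, M x (σ x))
        = ∑ j, (Equiv.Perm.sign σ : ℤ) • ((∏ x ∈ univ.erase j, M x (σ x)) * derivative (M j (σ j))) := by
    intro σ
    rw [map_zsmul, derivative_finset_prod, Finset.smul_sum]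
  rw [Finset.sum_congr rfl fun σ _ => lhs_eq σ, Finset.sum_comm]
  refine Finset.sum_congr rfl fun j _ => ?_
  rw [hrow (M.updateRow j _)]
  refine Finset.sum_congr rfl fun σ _ => ?_
  congr 1
  rw [← Finset.mul_prod_erase univ _ (Finset.mem_univ j), Matrix.updateRow_self, mul_comm]
  congr 1
  refine Finset.prod_congr rfl fun x hx => ?_
  rw [Matrix.updateRow_ne (Finset.ne_of_mem_erase hx)]

end Aux
lemma numPaths_succ' (n : ℕ) : ∀ (p : ℕ) (I K : Finset ℕ),
    numPaths n (p + 1) I K =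
      ∑ b ∈ K.filter (fun b => 1 ≤ b ∧ b - 1 ∉ K ∧ b < n),
        numPaths n p I (insert (b - 1) (K.erase b)) := by
  intro p
  induction p with
  | zero =>
    intro I K
    simp only [numPaths]
    rw [← Finset.sum_filter, ← Finset.sum_filter, Finset.filter_filter, Finset.filter_filter]
    refine Finset.sum_nbij' (fun a => a + 1) (fun b => b - 1) ?_ ?_ ?_ ?_ ?_
    · intro a ha
      simp only [Finset.mem_filter] at ha ⊢
      obtain ⟨haI, ⟨hnI, hn⟩, hK⟩ := ha
      subst hK
      refine ⟨Finset.mem_insert_self _ _, ⟨by omega, ?_, by omega⟩, ?_⟩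
      · simp only [Nat.add_sub_cancel, Finset.mem_insert, Finset.mem_erase]
        push_neg
        exact ⟨by omega, fun h => (h rfl).elim⟩
      · rw [Nat.add_sub_cancel, Finset.erase_insert (by simp [Finset.mem_erase, hnI]),
          Finset.insert_erase haI]
    · intro b hb
      simp only [Finset.mem_filter] at hb ⊢
      obtain ⟨hbK, ⟨hb1, hnK, hbn⟩, hI⟩ := hb
      subst hI
      have hb' : b - 1 + 1 = b := by omega
      refine ⟨Finset.mem_insert_self _ _, ⟨?_, by omega⟩, ?_⟩
      · rw [hb']
        simp only [Finset.mem_insert, Finset.mem_erase]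
        push_neg
        exact ⟨by omega, fun h => (h rfl).elim⟩
      · rw [hb', Finset.erase_insert (by simp [Finset.mem_erase, hnK]),
          Finset.insert_erase hbK]
    · intro a ha; show a + 1 - 1 = a; omega
    · intro b hb
      simp only [Finset.mem_filter] at hb
      show b - 1 + 1 = b
      omega
    · intro a _; rfl
  | succ p ih =>
    intro I K
    show (∑ a ∈ I.filter _, numPaths n (p + 1) (insert (a + 1) (I.erase a)) K) = _
    calc (∑ a ∈ I.filter (fun a => a + 1 ∉ I ∧ a + 1 < n),
            numPaths n (p + 1) (insert (a + 1) (I.erase a)) K)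
        = ∑ a ∈ I.filter (fun a => a + 1 ∉ I ∧ a + 1 < n),
            ∑ b ∈ K.filter (fun b => 1 ≤ b ∧ b - 1 ∉ K ∧ b < n),
              numPaths n p (insert (a + 1) (I.erase a)) (insert (b - 1) (K.erase b)) :=
        Finset.sum_congr rfl fun a _ => ih _ _
      _ = ∑ b ∈ K.filter (fun b => 1 ≤ b ∧ b - 1 ∉ K ∧ b < n),
            ∑ a ∈ I.filter (fun a => a + 1 ∉ I ∧ a + 1 < n),
              numPaths n p (insert (a + 1) (I.erase a)) (insert (b - 1) (K.erase b)) :=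
        Finset.sum_comm
      _ = _ := Finset.sum_congr rfl fun b _ => rfl

lemma sum_range_le_aux : ∀ (i : ℕ) (I : Finset ℕ), I.card = i →
    (∑ a ∈ range i, a) ≤ (∑ a ∈ I, a) ∧ ((∑ a ∈ I, a) ≤ ∑ a ∈ range i, a → I = range i) := by
  intro i
  induction i with
  | zero =>
    intro I hI
    rw [Finset.card_eq_zero] at hI
    subst hI
    simp
  | succ i ih =>
    intro I hI
    have hne : I.Nonempty := Finset.card_pos.mp (by omega)
    have hmI : I.max' hne ∈ I := I.max'_mem hne
    set m := I.max' hne with hm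
    have hcard : (I.erase m).card = i := by rw [Finset.card_erase_of_mem hmI, hI]; omega
    have him : i ≤ m := by
      by_contra hcon
      push_neg at hcon
      have hsub : I ⊆ range i := fun a ha =>
        Finset.mem_range.mpr (lt_of_le_of_lt (I.le_max' a ha) hcon)
      have := Finset.card_le_card hsub
      rw [hI, Finset.card_range] at this
      omega
    obtain ⟨hle, heq⟩ := ih (I.erase m) hcard
    have hsum : ∑ a ∈ I, a = m + ∑ a ∈ I.erase m, a := (Finset.add_sum_erase _ _ hmI).symm
    have hrange : ∑ a ∈ range (i + 1), a = (∑ a ∈ range i, a) + i := Finset.sum_range_succ _ _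
    constructor
    · omega
    · intro hle2
      have hmeq : m = i := by omega
      have herase : I.erase m = range i := heq (by omega)
      rw [← Finset.insert_erase hmI, herase, hmeq, Finset.range_add_one]

lemma lenZ_eq (i : ℕ) (I : Finset ℕ) : lenZ i I = (∑ a ∈ I, a) - ∑ a ∈ range i, a := by
  rw [lenZ, Finset.sum_range_id]

lemma algdiv_mul_succ {k : Type*} [CommRing k] [Algebra ℚ k] (x : ℚ) (m : ℕ) :
    algebraMap ℚ k (x / (m + 1).factorial) * ((m : k) + 1) = algebraMap ℚ k (x / m.factorial) := by
  have h : ((m : k) + 1) = algebraMap ℚ k ((m : ℚ) + 1) := by push_cast; simp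
  rw [h, ← map_mul]
  congr 1
  have h2 : (m.factorial : ℚ) ≠ 0 := Nat.cast_ne_zero.mpr m.factorial_ne_zero
  have h1 : ((m : ℚ) + 1) ≠ 0 := by positivity
  rw [Nat.factorial_succ]
  push_cast
  field_simp

lemma detWm_eq (k : Type*) [CommRing k] [Algebra ℚ k] (n i : ℕ) (hi : 1 ≤ i) :
    ∀ (L : ℕ) (I : Finset ℕ) (h : I.card = i), I ⊆ range n → lenZ i I = L →
    Matrix.det (fun p q : Fin i => Wm k (I.orderEmbOfFin h p) q)
      = C (algebraMap ℚ k ((numPaths n L (range i) I : ℚ) / L.factorial)) * X ^ L := by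
  intro L
  induction L with
  | zero =>
    intro I h hsub hlen
    have hT := sum_range_le_aux i I h
    have hle : (∑ a ∈ I, a) ≤ ∑ a ∈ range i, a := by
      have := lenZ_eq i I
      omega
    have hIeq : I = range i := hT.2 hle
    subst hIeq
    have hr : ∀ p : Fin i, ((range i).orderEmbOfFin h p : ℕ) = (p : ℕ) := by
      have hu := Finset.orderEmbOfFin_unique h
        (f := fun p : Fin i => (p : ℕ)) (fun p => Finset.mem_range.mpr p.2)
        (fun a b hab => hab)
      exact fun p => (congrFun hu p).symm
    have hdet : Matrix.det (fun p q : Fin i => Wm k ((range i).orderEmbOfFin h p) q) = 1 := by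
      erw [Matrix.det_of_lowerTriangular]
      · refine Finset.prod_eq_one fun p _ => ?_
        rw [hr p, Wm, if_pos le_rfl, Nat.sub_self, pow_zero, mul_one, Nat.factorial_zero]
        norm_num
      · intro p q hlt
        have hlt' : (p : Fin i) < q := by simpa using hlt
        show Wm k (((range i).orderEmbOfFin h) p) (q : ℕ) = 0
        rw [hr p, Wm, if_neg (by exact_mod_cast not_le.mpr hlt')]
    rw [hdet]
    have hnum : numPaths n 0 (range i) (range i) = 1 := by simp [numPaths]
    rw [hnum]
    norm_num
  | succ L ihL =>
    intro I h hsub hlen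
    set r : Fin i → ℕ := fun p => I.orderEmbOfFin h p with hrdef
    have hrI : ∀ p, r p ∈ I := fun p => Finset.orderEmbOfFin_mem I h p
    have hrmono : StrictMono r := (I.orderEmbOfFin h).strictMono
    have hrn : ∀ p, r p < n := fun p => Finset.mem_range.mp (hsub (hrI p))
    have hrange : ∀ a ∈ I, ∃ p, r p = a := by
      intro a ha
      have : a ∈ Set.range (I.orderEmbOfFin h) := by
        rw [Finset.range_orderEmbOfFin]
        exact ha
      exact this
    have hsumle := (sum_range_le_aux i I h).1
    -- the derivative of the determinant
    have hder := derivative_det (k := k) (fun p q : Fin i => Wm k (r p) q)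
    have hterm : ∀ p : Fin i,
        (Matrix.updateRow (fun p q : Fin i => Wm k (r p) q) p
            fun q => derivative (Wm k (r p) q)).det
          = if 1 ≤ r p ∧ r p - 1 ∉ I then
              C (algebraMap ℚ k
                  ((numPaths n L (range i) (insert (r p - 1) (I.erase (r p))) : ℚ)
                    / L.factorial)) * X ^ L
            else 0 := by
      intro p
      by_cases h1 : 1 ≤ r p
      · have hrow : (fun q : Fin i => derivative (Wm k (r p) q))
            = fun q : Fin i => Wm k (r p - 1) q := funext fun q => Wm_derivative _ _ h1
        rw [hrow]
        by_cases h2 : r p - 1 ∈ I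
        · rw [if_neg (by tauto)]
          obtain ⟨p', hp'⟩ := hrange _ h2
          have hne : p' ≠ p := by
            intro hcon
            rw [hcon] at hp'
            omega
          apply Matrix.det_zero_of_row_eq hne
          funext q
          erw [Matrix.updateRow_ne hne, Matrix.updateRow_self, hp']
        · rw [if_pos ⟨h1, h2⟩]
          have hnotmem : r p - 1 ∉ I.erase (r p) := fun hc => h2 (Finset.mem_of_mem_erase hc)
          have hc' : (insert (r p - 1) (I.erase (r p))).card = i := by
            rw [Finset.card_insert_of_notMem hnotmem, Finset.card_erase_of_mem (hrI p), h]
            omega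
          have hmono : StrictMono (Function.update r p (r p - 1)) := by
            intro p1 p2 hlt
            rcases eq_or_ne p1 p with rfl | hne1
            · rw [Function.update_self, Function.update_of_ne (ne_of_gt hlt)]
              have := hrmono hlt
              omega
            · rcases eq_or_ne p2 p with rfl | hne2
              · rw [Function.update_self, Function.update_of_ne hne1]
                have hlt2 := hrmono hlt
                have hne3 : r p1 ≠ r p2 - 1 := fun hc => h2 (hc ▸ hrI p1)
                omega
              · rw [Function.update_of_ne hne1, Function.update_of_ne hne2]
                exact hrmono hlt
          have hmem : ∀ x : Fin i, Function.update r p (r p - 1) x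
              ∈ insert (r p - 1) (I.erase (r p)) := by
            intro x
            rcases eq_or_ne x p with rfl | hne1
            · rw [Function.update_self]
              exact Finset.mem_insert_self _ _
            · rw [Function.update_of_ne hne1]
              exact Finset.mem_insert_of_mem
                (Finset.mem_erase.mpr ⟨fun hc => hne1 (hrmono.injective hc), hrI x⟩)
          have hru : Function.update r p (r p - 1)
              = fun p' : Fin i => ((insert (r p - 1) (I.erase (r p))).orderEmbOfFin hc' p' : ℕ) :=
            Finset.orderEmbOfFin_unique hc' hmem hmono
          have hupd : (Matrix.updateRow (fun p q : Fin i => Wm k (r p) q) p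
              fun q : Fin i => Wm k (r p - 1) q)
              = fun p' q : Fin i => Wm k (Function.update r p (r p - 1) p') q := by
            funext p' q'
            rcases eq_or_ne p' p with rfl | hne1
            · erw [Matrix.updateRow_self, Function.update_self]
            · erw [Matrix.updateRow_ne hne1, Function.update_of_ne hne1]
          -- sums
          have hsub' : insert (r p - 1) (I.erase (r p)) ⊆ range n := by
            intro x hx
            rcases Finset.mem_insert.mp hx with rfl | hx
            · exact Finset.mem_range.mpr (by have := hrn p; omega)
            · exact hsub (Finset.mem_of_mem_erase hx)
          have hsum' : (∑ a ∈ insert (r p - 1) (I.erase (r p)), a) + 1 = ∑ a ∈ I, a := by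
            rw [Finset.sum_insert hnotmem]
            have := Finset.add_sum_erase I id (hrI p)
            simp only [id] at this
            omega
          have hlen' : lenZ i (insert (r p - 1) (I.erase (r p))) = L := by
            have e1 := lenZ_eq i (insert (r p - 1) (I.erase (r p)))
            have e2 := lenZ_eq i I
            have e3 := (sum_range_le_aux i _ hc').1
            omega
          rw [hupd, hru]
          exact ihL _ hc' hsub' hlen'
      · rw [if_neg (by omega)]
        apply Matrix.det_eq_zero_of_row_eq_zero p
        intro q
        have hr0 : r p = 0 := by omega
        have : Matrix.updateRow (fun p q : Fin i => Wm k (r p) q) p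
            (fun q => derivative (Wm k (r p) q)) p q = derivative (Wm k (r p) q) := by
          erw [Matrix.updateRow_self]
        rw [this, hr0]
        rcases Nat.eq_zero_or_pos (q : ℕ) with hq | hq
        · rw [Wm, if_pos (by omega), hq]
          simp
        · rw [Wm, if_neg (by omega)]
          simp
    -- helpers for the index bijection
    have hr_symm : ∀ (b : ℕ) (hb : b ∈ I), r ((I.orderIsoOfFin h).symm ⟨b, hb⟩) = b := by
      intro b hb
      show ((I.orderEmbOfFin h) _ : ℕ) = b
      rw [← Finset.coe_orderIsoOfFin_apply, (I.orderIsoOfFin h).apply_symm_apply]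
    have hsymm_r : ∀ p : Fin i, (I.orderIsoOfFin h).symm ⟨r p, hrI p⟩ = p := by
      intro p
      have heq : (⟨r p, hrI p⟩ : {x // x ∈ I}) = I.orderIsoOfFin h p := by
        apply Subtype.ext
        rw [Finset.coe_orderIsoOfFin_apply]
      rw [heq, (I.orderIsoOfFin h).symm_apply_apply]
    have hder2 : derivative (Matrix.det fun p q : Fin i => Wm k (r p) (q : ℕ))
        = ∑ p ∈ univ.filter (fun p : Fin i => 1 ≤ r p ∧ r p - 1 ∉ I),
            C (algebraMap ℚ k
                ((numPaths n L (range i) (insert (r p - 1) (I.erase (r p))) : ℚ)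
                  / L.factorial)) * X ^ L := by
      rw [hder, Finset.sum_congr rfl fun p _ => hterm p, Finset.sum_filter]
    have hbij : ∑ p ∈ univ.filter (fun p : Fin i => 1 ≤ r p ∧ r p - 1 ∉ I),
            C (algebraMap ℚ k
                ((numPaths n L (range i) (insert (r p - 1) (I.erase (r p))) : ℚ)
                  / L.factorial)) * X ^ L
        = ∑ b ∈ I.filter (fun b => 1 ≤ b ∧ b - 1 ∉ I ∧ b < n),
            C (algebraMap ℚ k
                ((numPaths n L (range i) (insert (b - 1) (I.erase b)) : ℚ)
                  / L.factorial)) * X ^ L := by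
      refine Finset.sum_bij' (fun p _ => r p)
        (fun b hb => (I.orderIsoOfFin h).symm ⟨b, (Finset.mem_filter.mp hb).1⟩)
        ?_ ?_ ?_ ?_ ?_
      · intro p hp
        simp only [Finset.mem_filter, Finset.mem_univ, true_and] at hp ⊢
        exact ⟨hrI p, hp.1, hp.2, hrn p⟩
      · intro b hb
        have hb' := Finset.mem_filter.mp hb
        simp only [Finset.mem_filter, Finset.mem_univ, true_and]
        rw [hr_symm b hb'.1]
        exact ⟨hb'.2.1, hb'.2.2.1⟩
      · intro p hp
        exact hsymm_r p
      · intro b hb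
        exact hr_symm b (Finset.mem_filter.mp hb).1
      · intro p hp
        rfl
    have hcollapse : ∑ b ∈ I.filter (fun b => 1 ≤ b ∧ b - 1 ∉ I ∧ b < n),
            C (algebraMap ℚ k
                ((numPaths n L (range i) (insert (b - 1) (I.erase b)) : ℚ)
                  / L.factorial)) * X ^ L
        = C (algebraMap ℚ k ((numPaths n (L + 1) (range i) I : ℚ) / L.factorial)) * X ^ L := by
      rw [numPaths_succ', ← Finset.sum_mul]
      congr 1
      rw [← map_sum, ← map_sum, ← Finset.sum_div]
      norm_cast
    have hne_range : I ≠ range i := by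
      intro hcon
      rw [hcon, lenZ_eq] at hlen
      omega
    obtain ⟨a, haI, hai⟩ : ∃ a ∈ I, ¬ a ∈ range i := by
      by_contra hcon
      push_neg at hcon
      exact hne_range (Finset.eq_of_subset_of_card_le hcon (by rw [Finset.card_range, h]))
    obtain ⟨p0, hp0⟩ := hrange a haI
    have hia : i ≤ a := by simpa [Finset.mem_range, not_lt] using hai
    have hcc : (Matrix.det fun p q : Fin i => Wm k (r p) (q : ℕ)).coeff 0 = 0 := by
      have hmapdet := RingHom.map_det (constantCoeff : Polynomial k →+* k)
        (Matrix.of fun p q : Fin i => Wm k (r p) (q : ℕ))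
      have : (Matrix.det fun p q : Fin i => Wm k (r p) (q : ℕ)).coeff 0
          = Matrix.det ((Matrix.of fun p q : Fin i => Wm k (r p) (q : ℕ)).map constantCoeff) :=
        hmapdet
      rw [this]
      apply Matrix.det_eq_zero_of_row_eq_zero p0
      intro q
      show ((Wm k (r p0) (q : ℕ)).coeff 0) = 0
      rw [Wm_coeff_zero, if_neg (by have := q.2; omega)]
    have hrhs_cc : (C (algebraMap ℚ k
          ((numPaths n (L + 1) (range i) I : ℚ) / (L + 1).factorial)) * X ^ (L + 1)).coeff 0
        = 0 := by
      rw [coeff_C_mul, coeff_X_pow, if_neg (by omega), mul_zero]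
    have hrhs_der : derivative (C (algebraMap ℚ k
          ((numPaths n (L + 1) (range i) I : ℚ) / (L + 1).factorial)) * X ^ (L + 1))
        = C (algebraMap ℚ k ((numPaths n (L + 1) (range i) I : ℚ) / L.factorial)) * X ^ L := by
      rw [derivative_C_mul, derivative_X_pow, ← mul_assoc, ← C_mul, Nat.add_sub_cancel]
      congr 2
      push_cast
      exact algdiv_mul_succ _ _
    change (Matrix.det fun p q : Fin i => Wm k (r p) (q : ℕ)) = _
    refine poly_eq_of_derivative_eq ?_ ?_
    · rw [hder2, hbij, hcollapse, hrhs_der]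
    · rw [hcc, hrhs_cc]

lemma det_eq_sum_perm {R : Type*} [CommRing R] {m : ℕ} (N : Matrix (Fin m) (Fin m) R) :
    N.det = ∑ σ : Equiv.Perm (Fin m), ((Equiv.Perm.sign σ : ℤ) : R) * ∏ x, N x (σ x) := by
  rw [← Matrix.det_transpose, Matrix.det_apply']
  rfl

lemma iterate_derivative_finset_sum {k : Type*} [CommRing k] {ι : Type*} (s : Finset ι)
    (f : ι → Polynomial k) (q : ℕ) :
    derivative^[q] (∑ j ∈ s, f j) = ∑ j ∈ s, derivative^[q] (f j) := by
  induction q with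
  | zero => simp
  | succ q ih =>
    rw [Function.iterate_succ_apply', ih, map_sum]
    exact Finset.sum_congr rfl fun j _ => (Function.iterate_succ_apply' _ _ _).symm

lemma C_desc_eq {k : Type*} [CommRing k] [Algebra ℚ k] (j q : ℕ) :
    C (algebraMap ℚ k (1 / j.factorial)) * (C ((j.descFactorial q : k)) * X ^ (j - q))
      = Wm k j q := by
  rcases le_or_gt q j with hqj | hqj
  · rw [Wm, if_pos hqj, ← mul_assoc, ← C_mul]
    congr 2
    have hcast : ((j.descFactorial q : ℕ) : k) = algebraMap ℚ k ((j.descFactorial q : ℕ) : ℚ) := by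
      rw [map_natCast]
    rw [hcast, ← map_mul]
    congr 1
    have hfac := Nat.factorial_mul_descFactorial hqj
    have h1 : (j.factorial : ℚ) ≠ 0 := Nat.cast_ne_zero.mpr j.factorial_ne_zero
    have h2 : ((j - q).factorial : ℚ) ≠ 0 := Nat.cast_ne_zero.mpr (j - q).factorial_ne_zero
    have hfacq : ((j - q).factorial : ℚ) * (j.descFactorial q : ℚ) = (j.factorial : ℚ) := by
      exact_mod_cast congrArg (Nat.cast : ℕ → ℚ) hfac
    field_simp
    linarith [hfacq]
  · rw [Wm, if_neg (by omega), Nat.descFactorial_eq_zero_iff_lt.mpr hqj,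
      Nat.cast_zero, map_zero, zero_mul, mul_zero]

lemma fiber_sum {k : Type*} [CommRing k] [Algebra ℚ k] {n i : ℕ}
    (g : ℕ → ℕ → k) (I : Finset ℕ) (hc : I.card = i) (hsubI : I ⊆ range n) :
    ∑ r ∈ ((Fintype.piFinset fun _ : Fin i => range n).filter
        (fun r => Function.Injective r)).filter (fun r => Finset.image r Finset.univ = I),
        (∏ p : Fin i, C (g p (r p))) * Matrix.det (fun p q : Fin i => Wm k (r p) (q : ℕ))
      = Matrix.det (fun p q : Fin i => C (g p ((I.orderEmbOfFin hc) q)))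
          * Matrix.det (fun p q : Fin i => Wm k ((I.orderEmbOfFin hc) p) (q : ℕ)) := by
  classical
  have hrImem : ∀ q : Fin i, ((I.orderEmbOfFin hc) q : ℕ) ∈ I :=
    fun q => Finset.orderEmbOfFin_mem I hc q
  have hrIinj : Function.Injective fun p : Fin i => ((I.orderEmbOfFin hc) p : ℕ) :=
    (I.orderEmbOfFin hc).injective
  have hmem' : ∀ r ∈ ((Fintype.piFinset fun _ : Fin i => range n).filter
      (fun r => Function.Injective r)).filter (fun r => Finset.image r Finset.univ = I),
      (∀ p, r p ∈ I) ∧ Function.Injective r := by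
    intro r hr
    obtain ⟨hr1, hr2⟩ := Finset.mem_filter.mp hr
    refine ⟨fun p => ?_, (Finset.mem_filter.mp hr1).2⟩
    rw [← hr2]
    exact Finset.mem_image_of_mem r (Finset.mem_univ p)
  have key : ∀ (r : Fin i → ℕ), (∀ p, r p ∈ I) → Function.Injective r →
      ∃ σ : Equiv.Perm (Fin i), ∀ p, r p = (I.orderEmbOfFin hc) (σ p) := by
    intro r hmem hinj
    have hinj2 : Function.Injective
        (fun p : Fin i => (I.orderIsoOfFin hc).symm ⟨r p, hmem p⟩) := by
      intro p1 p2 hpe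
      have h3 := congrArg (I.orderIsoOfFin hc) hpe
      rw [OrderIso.apply_symm_apply, OrderIso.apply_symm_apply] at h3
      exact hinj (congrArg Subtype.val h3)
    refine ⟨Equiv.ofBijective _ (Finite.injective_iff_bijective.mp hinj2), fun p => ?_⟩
    show r p = ((I.orderEmbOfFin hc) (Equiv.ofBijective _ _ p) : ℕ)
    rw [Equiv.ofBijective_apply, ← Finset.coe_orderIsoOfFin_apply,
      OrderIso.apply_symm_apply]
  rw [det_eq_sum_perm (fun p q : Fin i => C (g p ((I.orderEmbOfFin hc) q))), Finset.sum_mul]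
  refine Finset.sum_bij'
    (fun r hr => (key r (hmem' r hr).1 (hmem' r hr).2).choose)
    (fun σ _ => fun p : Fin i => ((I.orderEmbOfFin hc) (σ p) : ℕ)) ?_ ?_ ?_ ?_ ?_
  · intro r hr
    exact Finset.mem_univ _
  · intro σ _
    refine Finset.mem_filter.mpr ⟨Finset.mem_filter.mpr ⟨?_, ?_⟩, ?_⟩
    · exact Fintype.mem_piFinset.mpr fun p => hsubI (hrImem (σ p))
    · exact hrIinj.comp σ.injective
    · have hinjσ : Function.Injective fun p : Fin i => ((I.orderEmbOfFin hc) (σ p) : ℕ) :=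
        fun p1 p2 hpe => σ.injective (hrIinj hpe)
      apply Finset.eq_of_subset_of_card_le
      · intro a ha
        obtain ⟨p, _, rfl⟩ := Finset.mem_image.mp ha
        exact hrImem _
      · show I.card ≤ (Finset.image (fun p : Fin i => ((I.orderEmbOfFin hc) (σ p) : ℕ))
            Finset.univ).card
        rw [hc, Finset.card_image_of_injective _ hinjσ, Finset.card_univ, Fintype.card_fin]
  · intro r hr
    funext p
    exact (((key r (hmem' r hr).1 (hmem' r hr).2).choose_spec) p).symm
  · intro σ hσ
    have h1 : ∀ p : Fin i, ((I.orderEmbOfFin hc) (σ p) : ℕ) ∈ I := fun p => hrImem _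
    have h2 : Function.Injective (fun p : Fin i => ((I.orderEmbOfFin hc) (σ p) : ℕ)) :=
      fun p1 p2 hpe => σ.injective (hrIinj hpe)
    apply Equiv.ext
    intro p
    apply hrIinj
    show ((I.orderEmbOfFin hc) _ : ℕ) = ((I.orderEmbOfFin hc) (σ p) : ℕ)
    exact (((key (fun p : Fin i => ((I.orderEmbOfFin hc) (σ p) : ℕ)) h1 h2).choose_spec) p).symm
  · intro r hr
    have hspec := (key r (hmem' r hr).1 (hmem' r hr).2).choose_spec
    set σ := (key r (hmem' r hr).1 (hmem' r hr).2).choose with hσ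
    have hprod : (∏ p : Fin i, C (g p (r p)))
        = ∏ p : Fin i, C (g p ((I.orderEmbOfFin hc) (σ p))) :=
      Finset.prod_congr rfl fun p _ => by rw [hspec p]
    have hdetp : Matrix.det (fun p q : Fin i => Wm k (r p) (q : ℕ))
        = ((Equiv.Perm.sign σ : ℤ) : Polynomial k)
            * Matrix.det (fun p q : Fin i => Wm k ((I.orderEmbOfFin hc) p) (q : ℕ)) := by
      have hsub2 : (fun p q : Fin i => Wm k (r p) (q : ℕ))
          = (Matrix.of fun p q : Fin i => Wm k ((I.orderEmbOfFin hc) p) (q : ℕ)).submatrix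
              σ id := by
        funext p q
        show Wm k (r p) (q : ℕ) = Wm k ((I.orderEmbOfFin hc) (σ p)) (q : ℕ)
        rw [hspec p]
      rw [hsub2, Matrix.det_permute]
      rfl
    rw [hprod, hdetp]
    ring

/-- for `g ∈ Mat_n(k)` (`k` a commutative `ℚ`-algebra), rows encoded
as `b p (t) = ∑_j g_{p,j} t^j/j!` (0-based), the `i`-th Wronskian
`y_i(g) = W(b_1,...,b_i)` equals
`∑_{I ∈ C_n^i} m(I) · Δ_{[i],I}(g) · t^(ℓ(I))/ℓ(I)!`, where `m(I)` is the number of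
saturated chains from the minimal `i`-subset to `I`. -/
theorem wronskian_eq_contraction_of_pluecker
    (k : Type*) [CommRing k] [Algebra ℚ k]
    (n i : ℕ) (hi : 1 ≤ i) (hin : i ≤ n)
    (g : ℕ → ℕ → k) (b : ℕ → Polynomial k)
    (hb : ∀ p, b p = ∑ j ∈ range n,
        C (g p j * algebraMap ℚ k (1 / j.factorial)) * X ^ j) :
    Matrix.det (fun p q : Fin i => (Polynomial.derivative (R := k))^[(q : ℕ)] (b p))
      = ∑ I ∈ (range n).powersetCard i,
          C (Matrix.det (fun p q : Fin i => g p ((I.sort (· ≤ ·)).getD q 0))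
              * algebraMap ℚ k ((numPaths n (lenZ i I) (range i) I : ℚ)
                  / (lenZ i I).factorial))
            * X ^ lenZ i I := by
  classical
  have hentry : (fun p q : Fin i => (Polynomial.derivative (R := k))^[(q : ℕ)] (b p))
      = fun p q : Fin i => ∑ j ∈ range n, C (g p j) * Wm k j (q : ℕ) := by
    funext p q
    rw [hb p, iterate_derivative_finset_sum]
    refine Finset.sum_congr rfl fun j _ => ?_
    rw [Polynomial.iterate_derivative_C_mul, Polynomial.iterate_derivative_X_pow_eq_C_mul,
      C_mul, mul_assoc]
    congr 1
    exact C_desc_eq j q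
  rw [hentry]
  have hexp : Matrix.det (fun p q : Fin i => ∑ j ∈ range n, C (g p j) * Wm k j (q : ℕ))
      = ∑ r ∈ Fintype.piFinset (fun _ : Fin i => range n),
          (∏ p : Fin i, C (g p (r p))) * Matrix.det (fun p q : Fin i => Wm k (r p) (q : ℕ)) := by
    have h1 : (fun p q : Fin i => ∑ j ∈ range n, C (g p j) * Wm k j (q : ℕ))
        = fun p : Fin i => ∑ j ∈ range n, C (g p j) • (fun q : Fin i => Wm k j (q : ℕ)) := by
      funext p q
      rw [Finset.sum_apply]
      rfl
    show Matrix.detRowAlternating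
        (fun p q : Fin i => ∑ j ∈ range n, C (g p j) * Wm k j (q : ℕ)) = _
    rw [h1]
    refine ((Matrix.detRowAlternating (n := Fin i) (R := Polynomial k)).toMultilinearMap.map_sum_finset
      (g := fun (p : Fin i) (j : ℕ) => C (g p j) • fun q : Fin i => Wm k j (q : ℕ))
      (A := fun _ => range n)).trans ?_
    refine Finset.sum_congr rfl fun r _ => ?_
    rw [MultilinearMap.map_smul_univ]
    rfl
  rw [hexp, ← Finset.sum_filter_add_sum_filter_not (Fintype.piFinset fun _ : Fin i => range n)
      (fun r => Function.Injective r)]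
  have hzero : (∑ r ∈ (Fintype.piFinset fun _ : Fin i => range n).filter
      (fun r => ¬ Function.Injective r),
      (∏ p : Fin i, C (g p (r p))) * Matrix.det (fun p q : Fin i => Wm k (r p) (q : ℕ))) = 0 := by
    refine Finset.sum_eq_zero fun r hr => ?_
    obtain ⟨p1, p2, hval, hne⟩ := Function.not_injective_iff.mp (Finset.mem_filter.mp hr).2
    erw [Matrix.det_zero_of_row_eq (M := Matrix.of fun p q : Fin i => Wm k (r p) (q : ℕ)) hne (funext fun q : Fin i => by
      show Wm k (r p1) (q : ℕ) = Wm k (r p2) (q : ℕ)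
      rw [hval]), mul_zero]
  rw [hzero, add_zero]
  have hmap : ∀ r ∈ (Fintype.piFinset fun _ : Fin i => range n).filter
      (fun r => Function.Injective r),
      Finset.image r Finset.univ ∈ (range n).powersetCard i := by
    intro r hr
    obtain ⟨hr1, hr2⟩ := Finset.mem_filter.mp hr
    refine Finset.mem_powersetCard.mpr ⟨?_, ?_⟩
    · intro a ha
      obtain ⟨p, _, rfl⟩ := Finset.mem_image.mp ha
      exact Fintype.mem_piFinset.mp hr1 p
    · rw [Finset.card_image_of_injective _ hr2, Finset.card_univ, Fintype.card_fin]
  rw [← Finset.sum_fiberwise_of_maps_to hmap]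
  refine Finset.sum_congr rfl fun I hI => ?_
  obtain ⟨hsubI, hcI⟩ := Finset.mem_powersetCard.mp hI
  rw [fiber_sum g I hcI hsubI, detWm_eq k n i hi (lenZ i I) I hcI hsubI rfl]
  have hgetD : (fun p q : Fin i => g p ((I.sort (· ≤ ·)).getD (q : ℕ) 0))
      = fun p q : Fin i => g p ((I.orderEmbOfFin hcI) q) := by
    funext p q
    congr 1
    have hlen : (q : ℕ) < (I.sort (· ≤ ·)).length := by
      rw [Finset.length_sort, hcI]
      exact q.2
    rw [List.getD_eq_getElem _ _ hlen]
    rfl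
  have hCdet : C (Matrix.det (fun p q : Fin i => g p ((I.orderEmbOfFin hcI) q)))
      = Matrix.det (fun p q : Fin i => C (g p ((I.orderEmbOfFin hcI) q))) := by
    erw [RingHom.map_det]
    rfl
  rw [hgetD, C_mul, hCdet]
  ring
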